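/- Define sequences by x_0 = 3, y_0 = 1, x_{k+1} = 8*x_k + 21*y_k, y_{k+1} = 3*x_k + 8*y_k. Then for every k with k ≡ 3 (mod 7), the pair (x_k, y_k/7) is a solution in positive integers to X^2 - 343*Y^2 = 2. -/
import Mathlib


theorem stmt_9 (x y : ℕ → ℤ) (hx0 : x 0 = 3) (hy0 : y 0 = 1)
    (hx : ∀ k, x (k + 1) = 8 * x k + 21 * y k)
    (hy : ∀ k, y (k + 1) = 3 * x k + 8 * y k) :
    ∀ k : ℕ, k % 7 = 3 →
      0 < x k ∧ 0 < y k / 7 ∧ (x k) ^ 2 - 343 * (y k / 7) ^ 2 = 2 := by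
  have key : ∀ k : ℕ, 0 < x k ∧ 0 < y k ∧ x k ^ 2 - 7 * (y k) ^ 2 = 2 ∧
      x k % 7 = 3 ∧ y k % 7 = (1 + 2 * (k : ℤ)) % 7 := by
    intro k
    induction k with
    | zero => simp [hx0, hy0]
    | succ n ih =>
      obtain ⟨h1, h2, h3, h4, h5⟩ := ih
      have ex := hx n
      have ey := hy n
      refine ⟨by nlinarith, by nlinarith, by rw [ex, ey]; linear_combination h3, by omega, ?_⟩
      push_cast
      omega
  intro k hk
  obtain ⟨h1, h2, h3, h4, h5⟩ := key k
  have hmod : y k % 7 = 0 := by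
    have : (k : ℤ) % 7 = 3 := by omega
    omega
  set m := y k / 7 with hm
  have hy7 : y k = 7 * m := by omega
  refine ⟨h1, by omega, ?_⟩
  rw [hy7] at h3
  linarith [h3]
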